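/- Let σ be a finite type and P : σ → σ → ℝ with P i j = P j i for all i, j. On A = MvPolynomial σ ℝ let Γ be the linear operator Γ F = (1/2) Σ_{i,j ∈ σ} P i j • ∂ᵢ(∂ⱼ F), and on A ⊗[ℝ] A let Γ' be the linear operator Γ' = Σ_{i,j ∈ σ} P i j • (∂ᵢ ⊗ ∂ⱼ). Since Γ and Γ' strictly lower total degree, they are locally nilpotent and exp(Γ) = Σₙ Γⁿ/n!, exp(−Γ), and exp(Γ') are well-defined linear maps (all sums are finite on each element). Then for all F, G ∈ A: exp(Γ)( exp(−Γ)F · exp(−Γ)G ) = M( exp(Γ')(F ⊗ G) ), where M : A ⊗[ℝ] A → A is the multiplication map. Equivalently, exp(Γ)(exp(−Γ)F · exp(−Γ)G) = Σₙ (1/n!) Σ_{i,j : Fin n → σ} (∏_{k} P (i k) (j k)) • (∂_{i 0} ⋯ ∂_{i(n−1)} F) · (∂_{j 0} ⋯ ∂_{j(n−1)} G), the sums being finite. -/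

import Mathlib

open MvPolynomial TensorProduct

/-- The `i`-th partial derivative on `ℝ[σ]` as a linear endomorphism. -/
noncomputable def pderivL (σ : Type*) [Fintype σ] (i : σ) :
    Module.End ℝ (MvPolynomial σ ℝ) :=
  (pderiv i : Derivation ℝ (MvPolynomial σ ℝ) (MvPolynomial σ ℝ)).toLinearMap

/-- The second-order operator `Γ F = (1/2) Σ_{i,j} P i j • ∂ᵢ(∂ⱼ F)` on the polynomial
algebra `ℝ[σ]`, a finite-dimensional model of the Euclidean time-ordering operator. -/
noncomputable def GammaOp (σ : Type*) [Fintype σ] (P : σ → σ → ℝ) :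
    Module.End ℝ (MvPolynomial σ ℝ) :=
  (2 : ℝ)⁻¹ • ∑ i : σ, ∑ j : σ, P i j • (pderivL σ i ∘ₗ pderivL σ j)

/-- The operator `Γ' = Σ_{i,j} P i j • (∂ᵢ ⊗ ∂ⱼ)` on `ℝ[σ] ⊗ ℝ[σ]`. -/
noncomputable def GammaOp' (σ : Type*) [Fintype σ] (P : σ → σ → ℝ) :
    Module.End ℝ (MvPolynomial σ ℝ ⊗[ℝ] MvPolynomial σ ℝ) :=
  ∑ i : σ, ∑ j : σ, P i j • TensorProduct.map (pderivL σ i) (pderivL σ j)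

/-- The exponential `exp T = Σₙ Tⁿ/n!` of a degree-lowering operator `T`, applied to a
polynomial `F`.  Since `T` strictly lowers total degree, `Tⁿ F = 0` for
`n > totalDegree F`, so the series is in fact the finite sum below. -/
noncomputable def expApply {σ : Type*} [Fintype σ]
    (T : Module.End ℝ (MvPolynomial σ ℝ)) (F : MvPolynomial σ ℝ) : MvPolynomial σ ℝ :=
  ∑ n ∈ Finset.range (F.totalDegree + 1), ((n.factorial : ℝ)⁻¹) • (T ^ n) F

section Aux

variable {σ : Type*}

lemma pderiv_comm' (i j : σ) (p : MvPolynomial σ ℝ) :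
    pderiv i (pderiv j p) = pderiv j (pderiv i p) := by
  induction p using MvPolynomial.induction_on' with
  | monomial s a =>
    classical
    simp only [pderiv_monomial]
    rcases eq_or_ne i j with rfl | hij
    · rfl
    · rw [tsub_right_comm]
      congr 1
      rw [Finsupp.tsub_apply, Finsupp.tsub_apply, Finsupp.single_eq_of_ne hij,
        Finsupp.single_eq_of_ne (Ne.symm hij)]
      simp only [Nat.sub_zero]
      ring
  | add p q hp hq => simp [map_add, hp, hq]

lemma coeff_pderiv (i : σ) (p : MvPolynomial σ ℝ) (m : σ →₀ ℕ) :
    coeff m (pderiv i p) = coeff (m + Finsupp.single i 1) p * (m i + 1) := by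
  classical
  induction p using MvPolynomial.induction_on' with
  | monomial s a =>
    simp only [pderiv_monomial, coeff_monomial]
    rcases eq_or_ne s (m + Finsupp.single i 1) with rfl | hs
    · rw [if_pos, if_pos rfl]
      · push_cast
        simp [Finsupp.add_apply, Finsupp.single_apply]
      · simp
    · rw [if_neg hs]
      rcases eq_or_ne (s - Finsupp.single i 1) m with he | he
      · rw [if_pos he]
        have hsi : s i = 0 := by
          by_contra h
          apply hs
          rw [← he]
          ext k
          rcases eq_or_ne k i with rfl | hk
          · simp [Finsupp.tsub_apply]
            omega
          · simp [Finsupp.tsub_apply, Finsupp.single_apply, Ne.symm hk]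
        simp [hsi]
      · simp [if_neg he]
  | add p q hp hq => simp [map_add, coeff_add, hp, hq]; ring

variable {σ : Type*}

lemma totalDegree_pderiv_lt (i : σ) (p : MvPolynomial σ ℝ) (h : pderiv i p ≠ 0) :
    (pderiv i p).totalDegree < p.totalDegree := by
  have key : ∀ m ∈ (pderiv i p).support, (m.sum fun _ n => n) < p.totalDegree := by
    intro m hm
    rw [mem_support_iff, coeff_pderiv] at hm
    have h1 : (m + Finsupp.single i 1) ∈ p.support := by
      rw [mem_support_iff]
      intro h0
      simp [h0] at hm
    have h2 := le_totalDegree h1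
    have h3 : ((m + Finsupp.single i 1).sum fun _ n => n)
        = (m.sum fun _ n => n) + 1 := by
      rw [Finsupp.sum_add_index' (fun _ => rfl) (fun _ _ _ => rfl)]
      simp
    omega
  obtain ⟨m, hm⟩ := (MvPolynomial.ne_zero_iff.mp h)
  have hm' : m ∈ (pderiv i p).support := mem_support_iff.mpr hm
  have hpos : 0 < p.totalDegree := lt_of_le_of_lt (Nat.zero_le _) (key m hm')
  rw [MvPolynomial.totalDegree]
  exact Finset.sup_lt_iff hpos |>.mpr key

/-- A degree-lowering linear endomorphism of the polynomial algebra. -/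
def DegLow (T : Module.End ℝ (MvPolynomial σ ℝ)) : Prop :=
  ∀ p, T p = 0 ∨ (T p).totalDegree < p.totalDegree

lemma DegLow.comp {T U : Module.End ℝ (MvPolynomial σ ℝ)} (hT : DegLow T) (hU : DegLow U) :
    DegLow (T * U) := by
  intro p
  rcases hU p with h | h
  · left; simp [Module.End.mul_apply, h]
  · rcases hT (U p) with h' | h'
    · left; simpa [Module.End.mul_apply] using h'
    · right; exact lt_trans h' h

lemma DegLow.smul {T : Module.End ℝ (MvPolynomial σ ℝ)} (c : ℝ) (hT : DegLow T) :
    DegLow (c • T) := by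
  intro p
  rcases hT p with h | h
  · left; simp [h]
  · right
    exact lt_of_le_of_lt (by simpa using totalDegree_smul_le c (T p)) h

lemma DegLow.sum {ι : Type*} (s : Finset ι) (f : ι → Module.End ℝ (MvPolynomial σ ℝ))
    (hf : ∀ i ∈ s, DegLow (f i)) : DegLow (∑ i ∈ s, f i) := by
  intro p
  rw [LinearMap.sum_apply]
  by_cases hz : ∀ i ∈ s, f i p = 0
  · left; exact Finset.sum_eq_zero hz
  · right
    push_neg at hz
    obtain ⟨i₀, hi₀, hne⟩ := hz
    have hpos : 0 < p.totalDegree := by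
      rcases hf i₀ hi₀ p with h | h
      · exact absurd h hne
      · exact lt_of_le_of_lt (Nat.zero_le _) h
    refine lt_of_le_of_lt (totalDegree_finset_sum s fun i => f i p) ?_
    rw [Finset.sup_lt_iff hpos]
    intro i hi
    rcases hf i hi p with h | h
    · simp [h, hpos]
    · exact h

lemma DegLow.neg {T : Module.End ℝ (MvPolynomial σ ℝ)} (hT : DegLow T) : DegLow (-T) := by
  intro p
  rcases hT p with h | h
  · left; simp [h]
  · right; simpa using h

lemma degLow_pderivL (i : σ) [Fintype σ] : DegLow (pderivL σ i) := by
  intro p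
  by_cases h : pderiv i p = 0
  · left; exact h
  · right; exact totalDegree_pderiv_lt i p h

lemma DegLow.pow_apply {T : Module.End ℝ (MvPolynomial σ ℝ)} (hT : DegLow T) (n : ℕ)
    (p : MvPolynomial σ ℝ) :
    (T ^ n) p = 0 ∨ ((T ^ n) p).totalDegree + n ≤ p.totalDegree := by
  induction n generalizing p with
  | zero => right; simp
  | succ n ih =>
    rw [pow_succ, Module.End.mul_apply]
    rcases hT p with h | h
    · left; simp [h]
    · rcases ih (T p) with h' | h'
      · left; exact h'
      · right; omega

lemma DegLow.pow_eq_zero {T : Module.End ℝ (MvPolynomial σ ℝ)} (hT : DegLow T) {n : ℕ}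
    {p : MvPolynomial σ ℝ} (h : p.totalDegree < n) : (T ^ n) p = 0 := by
  rcases hT.pow_apply n p with h' | h'
  · exact h'
  · omega

lemma DegLow.totalDegree_pow_le {T : Module.End ℝ (MvPolynomial σ ℝ)} (hT : DegLow T) (n : ℕ)
    (p : MvPolynomial σ ℝ) : ((T ^ n) p).totalDegree ≤ p.totalDegree := by
  rcases hT.pow_apply n p with h' | h'
  · simp [h']
  · omega

end Aux

section Aux2
open Finset
variable {V : Type*} [AddCommGroup V] [Module ℝ V]



lemma fact_coeff (n k : ℕ) (hk : k ≤ n) :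
    ((n.factorial : ℝ))⁻¹ * (n.choose k : ℝ)
      = (k.factorial : ℝ)⁻¹ * ((n - k).factorial : ℝ)⁻¹ := by
  have h := Nat.choose_mul_factorial_mul_factorial hk
  have h1 : (n.choose k : ℝ) * k.factorial * (n - k).factorial = n.factorial := by
    exact_mod_cast congrArg (Nat.cast : ℕ → ℝ) h
  have hk' : (k.factorial : ℝ) ≠ 0 := Nat.cast_ne_zero.mpr k.factorial_ne_zero
  have hnk' : ((n - k).factorial : ℝ) ≠ 0 := Nat.cast_ne_zero.mpr (n - k).factorial_ne_zero
  have hn' : (n.factorial : ℝ) ≠ 0 := Nat.cast_ne_zero.mpr n.factorial_ne_zero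
  field_simp
  linarith [h1]

lemma exp_add_apply (X Y : Module.End ℝ V) (h : Commute X Y) (t : V) (M N N' N'' : ℕ)
    (hN : M ≤ N) (hN' : M ≤ N') (hN'' : M ≤ N'')
    (hv : ∀ k m, M ≤ k + m → (X ^ k) ((Y ^ m) t) = 0) :
    ∑ n ∈ Finset.range N, ((n.factorial : ℝ)⁻¹) • ((X + Y) ^ n) t
      = ∑ k ∈ Finset.range N', ((k.factorial : ℝ)⁻¹) •
          (X ^ k) (∑ m ∈ Finset.range N'', ((m.factorial : ℝ)⁻¹) • (Y ^ m) t) := by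
  set g : ℕ × ℕ → V := fun km =>
    ((km.1.factorial : ℝ)⁻¹ * (km.2.factorial : ℝ)⁻¹) • (X ^ km.1) ((Y ^ km.2) t) with hg
  have hgz : ∀ km : ℕ × ℕ, M ≤ km.1 + km.2 → g km = 0 := by
    intro km hkm
    simp [hg, hv km.1 km.2 hkm]
  -- rectangle sums all agree with the M × M rectangle
  have rect : ∀ N₁ N₂ : ℕ, M ≤ N₁ → M ≤ N₂ →
      ∑ p ∈ range N₁ ×ˢ range N₂, g p = ∑ p ∈ range M ×ˢ range M, g p := by
    intro N₁ N₂ h₁ h₂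
    refine (Finset.sum_subset
      (Finset.product_subset_product (range_subset_range.mpr h₁) (range_subset_range.mpr h₂)) ?_).symm
    intro p hp hnp
    apply hgz
    simp only [Finset.mem_product, Finset.mem_range] at hp hnp
    by_contra hc
    push_neg at hc
    exact hnp ⟨by omega, by omega⟩
  -- RHS equals the rectangle sum
  have hrhs : ∑ k ∈ Finset.range N', ((k.factorial : ℝ)⁻¹) •
          (X ^ k) (∑ m ∈ Finset.range N'', ((m.factorial : ℝ)⁻¹) • (Y ^ m) t)
      = ∑ p ∈ range N' ×ˢ range N'', g p := by
    rw [Finset.sum_product]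
    refine Finset.sum_congr rfl fun k _ => ?_
    rw [map_sum, Finset.smul_sum]
    refine Finset.sum_congr rfl fun m _ => ?_
    rw [LinearMap.map_smul, smul_smul]
  -- LHS equals the triangle sum
  have hlhs : ∑ n ∈ Finset.range N, ((n.factorial : ℝ)⁻¹) • ((X + Y) ^ n) t
      = ∑ p ∈ (range N ×ˢ range N).filter (fun p => p.1 + p.2 < N), g p := by
    have step1 : ∀ n, ((n.factorial : ℝ)⁻¹) • ((X + Y) ^ n) t
        = ∑ k ∈ range (n + 1), g (k, n - k) := by
      intro n
      rw [h.add_pow]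
      simp only [LinearMap.sum_apply, Finset.smul_sum]
      refine Finset.sum_congr rfl fun k hk => ?_
      rw [Finset.mem_range] at hk
      have hk' : k ≤ n := by omega
      simp only [hg, Module.End.mul_apply, Module.End.natCast_apply]
      rw [← Nat.cast_smul_eq_nsmul ℝ, LinearMap.map_smul, LinearMap.map_smul, smul_smul,
        fact_coeff n k hk']
    simp only [step1]
    rw [Finset.sum_sigma']
    refine Finset.sum_nbij' (i := fun x => (x.2, x.1 - x.2)) (j := fun p => ⟨p.1 + p.2, p.1⟩)
      ?_ ?_ ?_ ?_ ?_
    · rintro ⟨n, k⟩ hx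
      simp only [Finset.mem_sigma, Finset.mem_range] at hx
      simp only [Finset.mem_filter, Finset.mem_product, Finset.mem_range]
      omega
    · rintro ⟨k, m⟩ hp
      simp only [Finset.mem_filter, Finset.mem_product, Finset.mem_range] at hp
      simp only [Finset.mem_sigma, Finset.mem_range]
      omega
    · rintro ⟨n, k⟩ hx
      simp only [Finset.mem_sigma, Finset.mem_range] at hx
      simp only [Sigma.mk.inj_iff]
      constructor
      · omega
      · rfl
    · rintro ⟨k, m⟩ hp
      dsimp only
      simp only [Prod.mk.injEq]
      exact ⟨trivial, by omega⟩
    · rintro ⟨n, k⟩ hx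
      rfl
  have tri : ∑ p ∈ (range N ×ˢ range N).filter (fun p => p.1 + p.2 < N), g p
      = ∑ p ∈ range N ×ˢ range N, g p := by
    refine Finset.sum_subset (Finset.filter_subset _ _) ?_
    intro p hp hnp
    apply hgz
    simp only [Finset.mem_product, Finset.mem_range] at hp
    by_contra hc
    push_neg at hc
    exact hnp (Finset.mem_filter.mpr ⟨Finset.mem_product.mpr ⟨Finset.mem_range.mpr hp.1,
      Finset.mem_range.mpr hp.2⟩, by omega⟩)
  rw [hlhs, hrhs, tri, rect N N hN hN, rect N' N'' hN' hN'']

lemma exp_zero_sum (t : V) (N : ℕ) (hN : 0 < N) :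
    ∑ n ∈ Finset.range N, ((n.factorial : ℝ)⁻¹) • ((0 : Module.End ℝ V) ^ n) t = t := by
  rw [Finset.sum_eq_single 0]
  · simp
  · intro n _ hn
    rw [zero_pow hn]
    simp
  · intro h
    exact absurd (Finset.mem_range.mpr hN) h
end Aux2

section Aux3
variable {σ : Type*} [Fintype σ]

lemma pderivL_apply (i : σ) (p : MvPolynomial σ ℝ) : pderivL σ i p = pderiv i p := rfl

lemma gammaOp_apply (P : σ → σ → ℝ) (p : MvPolynomial σ ℝ) :
    GammaOp σ P p = (2:ℝ)⁻¹ • ∑ i : σ, ∑ j : σ, P i j • pderiv i (pderiv j p) := by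
  simp [GammaOp, pderivL]

lemma gamma_mul (P : σ → σ → ℝ) (hP : ∀ i j, P i j = P j i) (x y : MvPolynomial σ ℝ) :
    GammaOp σ P (x * y) = GammaOp σ P x * y + x * GammaOp σ P y
      + ∑ i : σ, ∑ j : σ, P i j • (pderiv i x * pderiv j y) := by
  have expand : ∀ i j : σ, pderiv i (pderiv j (x*y))
      = pderiv i (pderiv j x) * y + pderiv j x * pderiv i y
        + (pderiv i x * pderiv j y + x * pderiv i (pderiv j y)) := by
    intro i j
    rw [pderiv_mul, map_add, pderiv_mul, pderiv_mul]
  have hB : ∑ i : σ, ∑ j : σ, P i j • (pderiv j x * pderiv i y)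
      = ∑ i : σ, ∑ j : σ, P i j • (pderiv i x * pderiv j y) := by
    rw [Finset.sum_comm]
    refine Finset.sum_congr rfl fun j _ => Finset.sum_congr rfl fun i _ => ?_
    rw [hP j i]
  have hxy : GammaOp σ P x * y
      = (2:ℝ)⁻¹ • ∑ i : σ, ∑ j : σ, P i j • (pderiv i (pderiv j x) * y) := by
    rw [gammaOp_apply, smul_mul_assoc, Finset.sum_mul]
    congr 1
    refine Finset.sum_congr rfl fun i _ => ?_
    rw [Finset.sum_mul]
    exact Finset.sum_congr rfl fun j _ => smul_mul_assoc _ _ _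
  have hyx : x * GammaOp σ P y
      = (2:ℝ)⁻¹ • ∑ i : σ, ∑ j : σ, P i j • (x * pderiv i (pderiv j y)) := by
    rw [gammaOp_apply, mul_smul_comm, Finset.mul_sum]
    congr 1
    refine Finset.sum_congr rfl fun i _ => ?_
    rw [Finset.mul_sum]
    exact Finset.sum_congr rfl fun j _ => mul_smul_comm _ _ _
  rw [gammaOp_apply, hxy, hyx]
  simp only [expand, smul_add, Finset.sum_add_distrib]
  rw [hB]
  module

variable (P : σ → σ → ℝ)

local notation "A" => MvPolynomial σ ℝ

noncomputable def TGamL : Module.End ℝ (A ⊗[ℝ] A) := TensorProduct.map (GammaOp σ P) LinearMap.id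
noncomputable def TGamR : Module.End ℝ (A ⊗[ℝ] A) := TensorProduct.map LinearMap.id (GammaOp σ P)

lemma commute_pderivL (i j : σ) : Commute (pderivL σ i) (pderivL σ j) := by
  apply LinearMap.ext
  intro p
  exact pderiv_comm' i j p

lemma commute_pderivL_gammaOp (i : σ) : Commute (pderivL σ i) (GammaOp σ P) := by
  unfold GammaOp
  refine Commute.smul_right ?_ _
  refine Commute.sum_right _ _ _ fun a _ => ?_
  refine Commute.sum_right _ _ _ fun b _ => ?_
  refine Commute.smul_right ?_ _
  exact (commute_pderivL i a).mul_right (commute_pderivL i b)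

lemma commute_GL_GR : Commute (TGamL (σ := σ) P) (TGamR (σ := σ) P) := by
  unfold TGamL TGamR Commute SemiconjBy
  rw [Module.End.mul_eq_comp, Module.End.mul_eq_comp, ← TensorProduct.map_comp,
    ← TensorProduct.map_comp]
  simp

lemma commute_C_GL : Commute (GammaOp' σ P) (TGamL (σ := σ) P) := by
  unfold GammaOp'
  refine Commute.sum_left _ _ _ fun a _ => ?_
  refine Commute.sum_left _ _ _ fun b _ => ?_
  refine Commute.smul_left ?_ _
  unfold TGamL Commute SemiconjBy
  rw [Module.End.mul_eq_comp, Module.End.mul_eq_comp, ← TensorProduct.map_comp,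
    ← TensorProduct.map_comp]
  rw [LinearMap.comp_id, LinearMap.id_comp, ← Module.End.mul_eq_comp, ← Module.End.mul_eq_comp,
    (commute_pderivL_gammaOp P a).eq]

lemma commute_C_GR : Commute (GammaOp' σ P) (TGamR (σ := σ) P) := by
  unfold GammaOp'
  refine Commute.sum_left _ _ _ fun a _ => ?_
  refine Commute.sum_left _ _ _ fun b _ => ?_
  refine Commute.smul_left ?_ _
  unfold TGamR Commute SemiconjBy
  rw [Module.End.mul_eq_comp, Module.End.mul_eq_comp, ← TensorProduct.map_comp,
    ← TensorProduct.map_comp]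
  rw [LinearMap.comp_id, LinearMap.id_comp, ← Module.End.mul_eq_comp, ← Module.End.mul_eq_comp,
    (commute_pderivL_gammaOp P b).eq]

lemma gammaOp'_tmul (u v : A) :
    GammaOp' σ P (u ⊗ₜ[ℝ] v) = ∑ i : σ, ∑ j : σ, P i j • (pderiv i u ⊗ₜ[ℝ] pderiv j v) := by
  simp [GammaOp', pderivL]

lemma mul'_comp_gamma (hP : ∀ i j, P i j = P j i) :
    (GammaOp σ P) ∘ₗ LinearMap.mul' ℝ A
      = (LinearMap.mul' ℝ A) ∘ₗ (GammaOp' σ P + (TGamL (σ := σ) P + TGamR (σ := σ) P)) := by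
  apply TensorProduct.ext'
  intro x y
  simp only [LinearMap.comp_apply, LinearMap.add_apply, LinearMap.mul'_apply, map_add]
  rw [gamma_mul P hP x y, gammaOp'_tmul]
  have h1 : (LinearMap.mul' ℝ (MvPolynomial σ ℝ))
      (∑ i : σ, ∑ j : σ, P i j • (pderiv i x ⊗ₜ[ℝ] pderiv j y))
      = ∑ i : σ, ∑ j : σ, P i j • (pderiv i x * pderiv j y) := by
    rw [map_sum]
    refine Finset.sum_congr rfl fun i _ => ?_
    rw [map_sum]
    refine Finset.sum_congr rfl fun j _ => ?_
    rw [LinearMap.map_smul, LinearMap.mul'_apply]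
  rw [h1]
  have h2 : TGamL (σ := σ) P (x ⊗ₜ[ℝ] y) = GammaOp σ P x ⊗ₜ[ℝ] y := rfl
  have h3 : TGamR (σ := σ) P (x ⊗ₜ[ℝ] y) = x ⊗ₜ[ℝ] GammaOp σ P y := rfl
  rw [h2, h3, LinearMap.mul'_apply, LinearMap.mul'_apply]
  ring

lemma gammaPow_mul' (hP : ∀ i j, P i j = P j i) (n : ℕ) :
    ((GammaOp σ P) ^ n) ∘ₗ LinearMap.mul' ℝ A
      = (LinearMap.mul' ℝ A) ∘ₗ ((GammaOp' σ P + (TGamL (σ := σ) P + TGamR (σ := σ) P)) ^ n) := by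
  induction n with
  | zero => simp [Module.End.one_eq_id]
  | succ n ih =>
    rw [pow_succ', pow_succ', Module.End.mul_eq_comp, Module.End.mul_eq_comp,
      LinearMap.comp_assoc, ih, ← LinearMap.comp_assoc, mul'_comp_gamma P hP,
      LinearMap.comp_assoc]

/-- Composition of partial derivatives along a word. -/
noncomputable def wordD : ∀ {r : ℕ}, (Fin r → σ) → Module.End ℝ (MvPolynomial σ ℝ)
  | 0, _ => 1
  | (_+1), f => wordD (Fin.tail f) * pderivL σ (f 0)

lemma sum_fun_succ {r : ℕ} {M : Type*} [AddCommMonoid M] (h : (Fin (r+1) → σ) → M) :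
    ∑ f : Fin (r+1) → σ, h f = ∑ a : σ, ∑ f : Fin r → σ, h (Fin.cons a f) := by
  rw [← (Fin.consEquiv (fun _ : Fin (r+1) => σ)).sum_comp h, Fintype.sum_prod_type]
  rfl

lemma wordD_cons {r : ℕ} (a : σ) (f : Fin r → σ) :
    wordD (Fin.cons a f) = wordD f * pderivL σ a := by
  simp only [wordD, Fin.tail_cons, Fin.cons_zero]

lemma gammaOp'_pow_tmul (r : ℕ) (u v : A) :
    ((GammaOp' σ P) ^ r) (u ⊗ₜ[ℝ] v)
      = ∑ f : Fin r → σ, ∑ g : Fin r → σ,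
          (∏ k, P (f k) (g k)) • ((wordD f) u ⊗ₜ[ℝ] (wordD g) v) := by
  induction r generalizing u v with
  | zero =>
    simp only [pow_zero, Module.End.one_apply]
    rw [Fintype.sum_unique, Fintype.sum_unique]
    simp [wordD]
  | succ r ih =>
    rw [pow_succ, Module.End.mul_apply, gammaOp'_tmul, map_sum]
    have lhs_eq : ∀ i : σ, ((GammaOp' σ P) ^ r) (∑ j : σ, P i j • (pderiv i u ⊗ₜ[ℝ] pderiv j v))
        = ∑ j : σ, P i j • ∑ f : Fin r → σ, ∑ g : Fin r → σ,
            (∏ k, P (f k) (g k)) • ((wordD f) (pderiv i u) ⊗ₜ[ℝ] (wordD g) (pderiv j v)) := by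
      intro i
      rw [map_sum]
      refine Finset.sum_congr rfl fun j _ => ?_
      rw [LinearMap.map_smul, ih]
    simp only [lhs_eq]
    rw [sum_fun_succ]
    refine Finset.sum_congr rfl fun i _ => ?_
    have rhs1 : ∀ f : Fin r → σ,
        (∑ g : Fin (r+1) → σ, (∏ k, P (Fin.cons (α := fun _ => σ) i f k) (g k)) •
            ((wordD (Fin.cons (α := fun _ => σ) i f)) u ⊗ₜ[ℝ] (wordD g) v))
        = ∑ j : σ, ∑ g : Fin r → σ, (P i j * ∏ k, P (f k) (g k)) •
            ((wordD f) ((pderiv i) u) ⊗ₜ[ℝ] (wordD g) ((pderiv j) v)) := by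
      intro f
      rw [sum_fun_succ]
      refine Finset.sum_congr rfl fun b _ => Finset.sum_congr rfl fun g _ => ?_
      rw [Fin.prod_univ_succ]
      simp only [Fin.cons_zero, Fin.cons_succ, wordD_cons, Module.End.mul_apply, pderivL_apply]
    simp only [rhs1, Finset.smul_sum, smul_smul]
    rw [Finset.sum_comm]

end Aux3

section Aux4


lemma wordD_apply_eq_zero {σ : Type*} [Fintype σ] :
    ∀ {r : ℕ} (f : Fin r → σ) (p : MvPolynomial σ ℝ), p.totalDegree < r → wordD f p = 0 := by
  intro r
  induction r with
  | zero => intro f p h; omega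
  | succ r ih =>
    intro f p h
    have : wordD f = wordD (Fin.tail f) * pderivL σ (f 0) := by simp only [wordD]
    rw [this, Module.End.mul_apply]
    rcases degLow_pderivL (f 0) p with h0 | h0
    · rw [pderivL_apply] at h0 ⊢
      rw [h0, map_zero]
    · exact ih _ _ (by omega)

lemma gammaOp'_pow_tmul_eq_zero_left {σ : Type*} [Fintype σ] (P : σ → σ → ℝ) (r : ℕ)
    (u v : MvPolynomial σ ℝ) (h : u.totalDegree < r) :
    ((GammaOp' σ P) ^ r) (u ⊗ₜ[ℝ] v) = 0 := by
  rw [gammaOp'_pow_tmul]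
  refine Finset.sum_eq_zero fun f _ => Finset.sum_eq_zero fun g _ => ?_
  rw [wordD_apply_eq_zero f u h, TensorProduct.zero_tmul, smul_zero]

lemma gammaOp'_pow_tmul_eq_zero_right {σ : Type*} [Fintype σ] (P : σ → σ → ℝ) (r : ℕ)
    (u v : MvPolynomial σ ℝ) (h : v.totalDegree < r) :
    ((GammaOp' σ P) ^ r) (u ⊗ₜ[ℝ] v) = 0 := by
  rw [gammaOp'_pow_tmul]
  refine Finset.sum_eq_zero fun f _ => Finset.sum_eq_zero fun g _ => ?_
  rw [wordD_apply_eq_zero g v h, TensorProduct.tmul_zero, smul_zero]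

lemma degLow_gammaOp {σ : Type*} [Fintype σ] (P : σ → σ → ℝ) : DegLow (GammaOp σ P) := by
  unfold GammaOp
  refine DegLow.smul _ (DegLow.sum _ _ fun i _ => DegLow.sum _ _ fun j _ => DegLow.smul _ ?_)
  exact DegLow.comp (degLow_pderivL i) (degLow_pderivL j)



set_option maxHeartbeats 2000000 in
theorem eProd_eq_mul_expGamma' (σ : Type*) [Fintype σ] (P : σ → σ → ℝ)
    (hP : ∀ i j, P i j = P j i) (F G : MvPolynomial σ ℝ) :
    expApply (GammaOp σ P) (expApply (-(GammaOp σ P)) F * expApply (-(GammaOp σ P)) G)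
      = LinearMap.mul' ℝ (MvPolynomial σ ℝ)
          (∑ n ∈ Finset.range (F.totalDegree + G.totalDegree + 1),
            ((n.factorial : ℝ)⁻¹) • (GammaOp' σ P ^ n) (F ⊗ₜ[ℝ] G)) := by
  classical
  set Γ := GammaOp σ P with hΓdef
  set Cc := GammaOp' σ P with hCdef
  set Ll := TGamL (σ := σ) P with hLdef
  set Rr := TGamR (σ := σ) P with hRdef
  set d1 := F.totalDegree with hd1
  set d2 := G.totalDegree with hd2
  set x := expApply (-Γ) F with hx
  set y := expApply (-Γ) G with hy
  have hdl : DegLow Γ := degLow_gammaOp P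
  have hdln : DegLow (-Γ) := hdl.neg
  have hneg : ∀ (a : ℕ) (p : MvPolynomial σ ℝ), ((-Γ)^a) p = ((-1:ℝ)^a) • (Γ^a) p := by
    intro a p
    have h1 : -Γ = (-1:ℝ) • Γ := (neg_one_smul ℝ Γ).symm
    rw [h1, smul_pow, LinearMap.smul_apply]
  have hxeq : x = ∑ a ∈ Finset.range (d1+1),
      ((a.factorial : ℝ)⁻¹) • ((-Γ)^a) F := by rw [hx]; rfl
  have hyeq : y = ∑ a ∈ Finset.range (d2+1),
      ((a.factorial : ℝ)⁻¹) • ((-Γ)^a) G := by rw [hy]; rfl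
  have hxe : ∀ p : ℕ, (Γ^p) x = ∑ a ∈ Finset.range (d1+1),
      (((a.factorial : ℝ)⁻¹) * ((-1:ℝ)^a)) • (Γ^(p+a)) F := by
    intro p
    rw [hxeq, map_sum]
    refine Finset.sum_congr rfl fun a _ => ?_
    rw [LinearMap.map_smul, hneg a F, LinearMap.map_smul, smul_smul, pow_add,
      Module.End.mul_apply]
  have hye : ∀ p : ℕ, (Γ^p) y = ∑ a ∈ Finset.range (d2+1),
      (((a.factorial : ℝ)⁻¹) * ((-1:ℝ)^a)) • (Γ^(p+a)) G := by
    intro p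
    rw [hyeq, map_sum]
    refine Finset.sum_congr rfl fun a _ => ?_
    rw [LinearMap.map_smul, hneg a G, LinearMap.map_smul, smul_smul, pow_add,
      Module.End.mul_apply]
  have hfx : ∀ {k a : ℕ}, d1 < k + a → (Γ^(k+a)) F = 0 := fun h => hdl.pow_eq_zero h
  have hΓx0 : ∀ k, d1 < k → (Γ^k) x = 0 := by
    intro k hk
    rw [hxe k]
    refine Finset.sum_eq_zero fun a _ => ?_
    rw [hfx (by omega), smul_zero]
  have hΓy0 : ∀ k, d2 < k → (Γ^k) y = 0 := by
    intro k hk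
    rw [hye k]
    refine Finset.sum_eq_zero fun a _ => ?_
    rw [hdl.pow_eq_zero (by omega : G.totalDegree < k + a), smul_zero]
  have hxdeg : x.totalDegree ≤ d1 := by
    rw [hxeq]
    refine totalDegree_finsetSum_le fun a _ => ?_
    exact le_trans (totalDegree_smul_le _ _) (hdln.totalDegree_pow_le a F)
  have hydeg : y.totalDegree ≤ d2 := by
    rw [hyeq]
    refine totalDegree_finsetSum_le fun a _ => ?_
    exact le_trans (totalDegree_smul_le _ _) (hdln.totalDegree_pow_le a G)
  have hLpow : ∀ (k:ℕ) (u v : MvPolynomial σ ℝ),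
      (Ll^k) (u ⊗ₜ[ℝ] v) = ((Γ^k) u) ⊗ₜ[ℝ] v := by
    intro k u v
    rw [hLdef]
    unfold TGamL
    rw [TensorProduct.map_pow, TensorProduct.map_tmul]
    congr 1
    rw [Module.End.id_pow]
    rfl
  have hRpow : ∀ (k:ℕ) (u v : MvPolynomial σ ℝ),
      (Rr^k) (u ⊗ₜ[ℝ] v) = u ⊗ₜ[ℝ] ((Γ^k) v) := by
    intro k u v
    rw [hRdef]
    unfold TGamR
    rw [TensorProduct.map_pow, TensorProduct.map_tmul]
    congr 1
    rw [Module.End.id_pow]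
    rfl
  -- the central vanishing claim
  have claim : ∀ k p q : ℕ, d1 + d2 + 1 ≤ k + (p + q) →
      (Cc^k) (((Γ^p) x) ⊗ₜ[ℝ] ((Γ^q) y)) = 0 := by
    intro k p q hkpq
    have inner : ∀ a b : ℕ, (Cc^k) (((Γ^(p+a)) F) ⊗ₜ[ℝ] ((Γ^(q+b)) G)) = 0 := by
      intro a b
      by_cases hcase : d1 < k + p
      · rcases hdl.pow_apply (p+a) F with h0 | h0
        · rw [h0, TensorProduct.zero_tmul, map_zero]
        · exact gammaOp'_pow_tmul_eq_zero_left P k _ _ (by omega)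
      · have hc2 : d2 < k + q := by omega
        rcases hdl.pow_apply (q+b) G with h0 | h0
        · rw [h0, TensorProduct.tmul_zero, map_zero]
        · exact gammaOp'_pow_tmul_eq_zero_right P k _ _ (by omega)
    rw [hxe p, hye q, TensorProduct.sum_tmul, map_sum]
    refine Finset.sum_eq_zero fun a _ => ?_
    rw [← TensorProduct.smul_tmul', LinearMap.map_smul, TensorProduct.tmul_sum, map_sum]
    rw [Finset.sum_eq_zero, smul_zero]
    intro b _
    rw [TensorProduct.tmul_smul, LinearMap.map_smul, inner a b, smul_zero]
  have hv2 : ∀ k m, d1 + d2 + 1 ≤ k + m → (Ll^k) ((Rr^m) (x ⊗ₜ[ℝ] y)) = 0 := by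
    intro k m h
    rw [hRpow, hLpow]
    by_cases hk : d1 < k
    · rw [hΓx0 k hk, TensorProduct.zero_tmul]
    · rw [hΓy0 m (by omega), TensorProduct.tmul_zero]
  have hv1 : ∀ k m, d1 + d2 + 1 ≤ k + m → (Cc^k) (((Ll+Rr)^m) (x ⊗ₜ[ℝ] y)) = 0 := by
    intro k m hkm
    have hbin : ((Ll+Rr)^m) (x ⊗ₜ[ℝ] y)
        = ∑ p ∈ Finset.range (m+1), (m.choose p) • (((Γ^p) x) ⊗ₜ[ℝ] ((Γ^(m-p)) y)) := by
      rw [(commute_GL_GR P).add_pow, LinearMap.sum_apply]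
      refine Finset.sum_congr rfl fun p hp => ?_
      rw [Module.End.mul_apply, Module.End.mul_apply, Module.End.natCast_apply,
        map_nsmul, map_nsmul, hRpow, hLpow]
    rw [hbin, map_sum]
    refine Finset.sum_eq_zero fun p hp => ?_
    rw [Finset.mem_range] at hp
    rw [map_nsmul, claim k p (m-p) (by omega), smul_zero]
  -- step 1 : extend the truncation of the outer exponential
  have hxy : (x * y).totalDegree ≤ d1 + d2 :=
    le_trans (totalDegree_mul x y) (by omega)
  have step1 : expApply Γ (x * y)
      = ∑ n ∈ Finset.range (d1 + d2 + 1), ((n.factorial : ℝ)⁻¹) • (Γ^n) (x*y) := by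
    refine Finset.sum_subset (Finset.range_subset_range.mpr (by omega)) ?_
    intro n hn hn'
    rw [Finset.mem_range] at hn
    rw [Finset.mem_range, not_lt] at hn'
    rw [hdl.pow_eq_zero (by omega), smul_zero]
  have step2 : ∀ n : ℕ, (Γ^n) (x*y)
      = (LinearMap.mul' ℝ (MvPolynomial σ ℝ)) (((Cc + (Ll + Rr))^n) (x ⊗ₜ[ℝ] y)) := by
    intro n
    have h := LinearMap.congr_fun (gammaPow_mul' P hP n) (x ⊗ₜ[ℝ] y)
    rw [LinearMap.comp_apply, LinearMap.comp_apply, LinearMap.mul'_apply] at h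
    exact h
  rw [step1]
  have step3 : ∑ n ∈ Finset.range (d1+d2+1), ((n.factorial : ℝ)⁻¹) • (Γ^n) (x*y)
      = (LinearMap.mul' ℝ (MvPolynomial σ ℝ))
          (∑ n ∈ Finset.range (d1+d2+1),
            ((n.factorial : ℝ)⁻¹) • ((Cc + (Ll + Rr))^n) (x ⊗ₜ[ℝ] y)) := by
    rw [map_sum]
    exact Finset.sum_congr rfl fun n _ => by rw [step2, LinearMap.map_smul]
  rw [step3]
  congr 1
  -- exponential splitting
  rw [exp_add_apply Cc (Ll+Rr) ((commute_C_GL P).add_right (commute_C_GR P)) (x ⊗ₜ[ℝ] y)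
    (d1+d2+1) (d1+d2+1) (d1+d2+1) (d1+d2+1) le_rfl le_rfl le_rfl hv1]
  rw [exp_add_apply Ll Rr (commute_GL_GR P) (x ⊗ₜ[ℝ] y)
    (d1+d2+1) (d1+d2+1) (d1+d2+1) (d1+d2+1) le_rfl le_rfl le_rfl hv2]
  have hvyG : ∀ k m, d2+1 ≤ k+m → (Γ^k) (((-Γ)^m) G) = 0 := by
    intro k m h
    rw [hneg, LinearMap.map_smul, ← Module.End.mul_apply, ← pow_add,
      hdl.pow_eq_zero (by omega : G.totalDegree < k + m), smul_zero]
  have hvxF : ∀ k m, d1+1 ≤ k+m → (Γ^k) (((-Γ)^m) F) = 0 := by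
    intro k m h
    rw [hneg, LinearMap.map_smul, ← Module.End.mul_apply, ← pow_add,
      hdl.pow_eq_zero (by omega : F.totalDegree < k + m), smul_zero]
  have hcneg : Commute Γ (-Γ) := (Commute.refl Γ).neg_right
  have hGy : ∑ m ∈ Finset.range (d1+d2+1), ((m.factorial : ℝ)⁻¹) • (Γ^m) y = G := by
    rw [hyeq]
    rw [← exp_add_apply Γ (-Γ) hcneg G (d2+1) (d2+1) (d1+d2+1) (d2+1)
      le_rfl (by omega) le_rfl hvyG]
    rw [add_neg_cancel]
    exact exp_zero_sum G _ (by omega)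
  have hGx : ∑ m ∈ Finset.range (d1+d2+1), ((m.factorial : ℝ)⁻¹) • (Γ^m) x = F := by
    rw [hxeq]
    rw [← exp_add_apply Γ (-Γ) hcneg F (d1+1) (d1+1) (d1+d2+1) (d1+1)
      le_rfl (by omega) le_rfl hvxF]
    rw [add_neg_cancel]
    exact exp_zero_sum F _ (by omega)
  have hyG : ∑ m ∈ Finset.range (d1+d2+1), ((m.factorial : ℝ)⁻¹) • (Rr^m) (x ⊗ₜ[ℝ] y)
      = x ⊗ₜ[ℝ] G := by
    have h1 : ∀ m : ℕ, ((m.factorial : ℝ)⁻¹) • (Rr^m) (x ⊗ₜ[ℝ] y)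
        = x ⊗ₜ[ℝ] (((m.factorial : ℝ)⁻¹) • (Γ^m) y) := by
      intro m
      rw [hRpow, TensorProduct.tmul_smul]
    rw [Finset.sum_congr rfl fun m _ => h1 m, ← TensorProduct.tmul_sum, hGy]
  rw [hyG]
  have hxF : ∑ k ∈ Finset.range (d1+d2+1), ((k.factorial : ℝ)⁻¹) • (Ll^k) (x ⊗ₜ[ℝ] G)
      = F ⊗ₜ[ℝ] G := by
    have h1 : ∀ k : ℕ, ((k.factorial : ℝ)⁻¹) • (Ll^k) (x ⊗ₜ[ℝ] G)
        = (((k.factorial : ℝ)⁻¹) • (Γ^k) x) ⊗ₜ[ℝ] G := by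
      intro k
      rw [hLpow, TensorProduct.smul_tmul']
    rw [Finset.sum_congr rfl fun k _ => h1 k, ← TensorProduct.sum_tmul, hGx]
  rw [hxF]
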